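/- If P ⊆ ℝ^d is a 0/1-polytope such that for every wall W of P the subgraph of G(P) induced on W is a regular graph, then P has fractional wall-matchings. -/

import Mathlib

open scoped Classical

noncomputable section

/-- All points of `X` are 0/1-vectors. -/
def IsZeroOne {ι : Type*} (X : Finset (ι → ℝ)) : Prop :=
  ∀ x ∈ X, ∀ i, x i = 0 ∨ x i = 1

/-- Two vertices `u v` of the 0/1-polytope `P = conv X` are adjacent iff they are
distinct and there is a linear functional whose maximum over `P` is attained
exactly on the segment `[u, v]`. -/
def PolytopeAdj {ι : Type*} [Fintype ι] (X : Finset (ι → ℝ)) (u v : ι → ℝ) : Prop :=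
  u ∈ X ∧ v ∈ X ∧ u ≠ v ∧ ∃ (f : (ι → ℝ) →ₗ[ℝ] ℝ) (c : ℝ),
    (∀ x ∈ convexHull ℝ (X : Set (ι → ℝ)), f x ≤ c) ∧
    {x ∈ convexHull ℝ (X : Set (ι → ℝ)) | f x = c} = segment ℝ u v

/-- The graph `G(P)` of the 0/1-polytope `P = conv X`, on the vertex set `X`. -/
def polytopeGraph {ι : Type*} [Fintype ι] (X : Finset (ι → ℝ)) :
    SimpleGraph {x // x ∈ X} where
  Adj u v := PolytopeAdj X u.1 v.1
  symm := by
    constructor; rintro u v ⟨hu, hv, hne, f, c, h1, h2⟩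
    exact ⟨hv, hu, hne.symm, f, c, h1, by rw [h2, segment_symm]⟩
  loopless := by constructor; rintro u ⟨_, _, hne, _⟩; exact hne rfl
/-- A wall of the 0/1-polytope with vertex set `X`: a nonempty set of vertices
obtained by intersecting `X` with a face of the 0/1-cube, given by a sign vector
`σ ∈ {0,1,⋆}^ι` (encoded as `ι → Option Bool`, `none` being `⋆`). -/
def IsWall {ι : Type*} (X : Finset (ι → ℝ)) (W : Set (ι → ℝ)) : Prop :=
  W.Nonempty ∧ ∃ σ : ι → Option Bool,
    W = {x | x ∈ X ∧ ∀ i, ∀ b, σ i = some b → x i = (if b then (1 : ℝ) else 0)}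

/-- `σ(W)ᵢ = ⋆`, i.e. the points of `W` do not all agree in coordinate `i`. -/
def IsStarCoord {ι : Type*} (W : Set (ι → ℝ)) (i : ι) : Prop :=
  ∃ x ∈ W, ∃ y ∈ W, x i ≠ y i
/-- `μ` is the smallest coordinate in which the points of `W` disagree,
i.e. `μ = μ(W)`. -/
def IsLeastStar {ι : Type*} [LinearOrder ι] (W : Set (ι → ℝ)) (μ : ι) : Prop :=
  IsStarCoord W μ ∧ ∀ j, j < μ → ¬ IsStarCoord W j

/-- `(u, v)` is an edge of the bipartite graph `B(W)` (with `μ = μ(W)`),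
oriented from the part `W₀` to the part `W₁`. -/
def WallBipAdj {ι : Type*} [Fintype ι] (X : Finset (ι → ℝ)) (W : Set (ι → ℝ))
    (μ : ι) (u v : ι → ℝ) : Prop :=
  PolytopeAdj X u v ∧ u ∈ W ∧ v ∈ W ∧ u μ = 0 ∧ v μ = 1

/-- The bipartite graph `B(W)` (with `μ = μ(W)`, parts `W₀` and `W₁`) has a
fractional matching: nonnegative weights on its edges such that every node of
`W₀` has weighted degree `1/|W₀|` and every node of `W₁` has weighted degree
`1/|W₁|`. -/
def HasFracMatching {ι : Type*} [Fintype ι] (X : Finset (ι → ℝ)) (W : Set (ι → ℝ))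
    (μ : ι) : Prop :=
  ∃ w : (ι → ℝ) → (ι → ℝ) → ℚ,
    (∀ u v, 0 ≤ w u v) ∧
    (∀ u v, w u v ≠ 0 → WallBipAdj X W μ u v) ∧
    (∀ u ∈ W, u μ = 0 → ∑ v ∈ X, w u v = 1 / ({x ∈ W | x μ = 0}.ncard : ℚ)) ∧
    (∀ v ∈ W, v μ = 1 → ∑ u ∈ X, w u v = 1 / ({x ∈ W | x μ = 1}.ncard : ℚ))

/-- The 0/1-polytope with vertex set `X` has fractional wall-matchings: for every
wall `W` with at least two points (equivalently, with a least star coordinate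
`μ(W)`), the bipartite graph `B(W)` has a fractional matching. -/
def HasFractionalWallMatchings {ι : Type*} [Fintype ι] [LinearOrder ι]
    (X : Finset (ι → ℝ)) : Prop :=
  ∀ W : Set (ι → ℝ), IsWall X W → ∀ μ : ι, IsLeastStar W μ → HasFracMatching X W μ

def coeffFn {d : ℕ} (c : Fin d → ℝ) : (Fin d → ℝ) →ₗ[ℝ] ℝ where
  toFun x := ∑ i, c i * x i
  map_add' x y := by simp [mul_add, Finset.sum_add_distrib]
  map_smul' r x := by simp [Finset.mul_sum, mul_left_comm]

/-- lex weights -/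
def lexW (d : ℕ) (i : Fin d) : ℝ := (2*d : ℝ)^(d - (i:ℕ))

lemma lexGt {d : ℕ} {x y : Fin d → ℝ} (hx : ∀ i, x i = 0 ∨ x i = 1)
    (hy : ∀ i, y i = 0 ∨ y i = 1) (i₀ : Fin d) (hlt : ∀ j : Fin d, j < i₀ → x j = y j)
    (h1 : x i₀ = 1) (h0 : y i₀ = 0) :
    ∑ i, lexW d i * y i < ∑ i, lexW d i * x i := by
  have hd : 1 ≤ (d:ℝ) := by
    have := i₀.isLt; exact_mod_cast Nat.one_le_iff_ne_zero.2 (by omega)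
  have hb : (1:ℝ) ≤ 2*d := by linarith
  have hb0 : (0:ℝ) ≤ 2*d := by linarith
  set e : ℕ := d - (i₀:ℕ) - 1 with he
  have hde : d - (i₀:ℕ) = e + 1 := by have := i₀.isLt; omega
  rw [← sub_pos, ← Finset.sum_sub_distrib]
  have key : ∀ j ∈ Finset.univ.erase i₀, -((2*(d:ℝ))^e) ≤ lexW d j * x j - lexW d j * y j := by
    intro j hj
    rcases lt_trichotomy j i₀ with h | h | h
    · rw [hlt j h, sub_self]; exact neg_nonpos.2 (by positivity)
    · exact absurd h (Finset.ne_of_mem_erase hj)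
    · have hcle : lexW d j ≤ (2*(d:ℝ))^e := by
        apply pow_le_pow_right₀ hb
        have := j.isLt; have : (i₀:ℕ) < (j:ℕ) := h; omega
      have hc0 : 0 ≤ lexW d j := by unfold lexW; positivity
      have hxy : -1 ≤ x j - y j := by rcases hx j with h'|h' <;> rcases hy j with h''|h'' <;>
        simp [h', h'']
      calc -((2*(d:ℝ))^e) ≤ -(lexW d j) := by linarith
        _ = lexW d j * (-1) := by ring
        _ ≤ lexW d j * (x j - y j) := by apply mul_le_mul_of_nonneg_left hxy hc0
        _ = lexW d j * x j - lexW d j * y j := by ring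
  have hsplit : ∑ j, (lexW d j * x j - lexW d j * y j)
      = (lexW d i₀ * x i₀ - lexW d i₀ * y i₀) + ∑ j ∈ Finset.univ.erase i₀, (lexW d j * x j - lexW d j * y j) :=
    (Finset.add_sum_erase _ _ (Finset.mem_univ i₀)).symm
  have h2 : ∑ j ∈ Finset.univ.erase i₀, (lexW d j * x j - lexW d j * y j)
      ≥ -((d:ℝ) * (2*(d:ℝ))^e) := by
    have := Finset.sum_le_sum key
    have hcard : ((Finset.univ.erase i₀).card : ℝ) ≤ (d:ℝ) := by
      have : (Finset.univ.erase i₀).card ≤ Fintype.card (Fin d) := by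
        apply Finset.card_le_card (Finset.erase_subset _ _) |>.trans; simp
      simpa using (Nat.cast_le.2 this : ((Finset.univ.erase i₀).card : ℝ) ≤ _)
    rw [Finset.sum_const, nsmul_eq_mul] at this
    have hpow : (0:ℝ) ≤ (2*(d:ℝ))^e := by positivity
    nlinarith
  have hmain : lexW d i₀ * x i₀ - lexW d i₀ * y i₀ = (2*(d:ℝ))*(2*(d:ℝ))^e := by
    rw [h1, h0]; unfold lexW; rw [hde, pow_succ]; ring
  have hpow : (0:ℝ) < (2*(d:ℝ))^e := by positivity
  rw [hsplit, hmain]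
  nlinarith

lemma lexInj {d : ℕ} {x y : Fin d → ℝ} (hx : ∀ i, x i = 0 ∨ x i = 1)
    (hy : ∀ i, y i = 0 ∨ y i = 1)
    (h : ∑ i, lexW d i * x i = ∑ i, lexW d i * y i) : x = y := by
  by_contra hne
  have hs : (Finset.univ.filter (fun i => x i ≠ y i)).Nonempty := by
    rcases Function.ne_iff.1 hne with ⟨i, hi⟩
    exact ⟨i, by simp [hi]⟩
  set i₀ := (Finset.univ.filter (fun i => x i ≠ y i)).min' hs with hi₀
  have hi₀mem : x i₀ ≠ y i₀ := by
    have := Finset.min'_mem _ hs; rw [← hi₀] at this; simpa using this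
  have hlt : ∀ j : Fin d, j < i₀ → x j = y j := by
    intro j hj
    by_contra hj'
    have : i₀ ≤ j := Finset.min'_le _ _ (by simp [hj'])
    exact absurd hj (not_lt.2 this)
  rcases hx i₀ with h1|h1 <;> rcases hy i₀ with h2|h2
  · exact hi₀mem (h1.trans h2.symm)
  · exact absurd h (ne_of_lt (lexGt hy hx i₀ (fun j hj => (hlt j hj).symm) h2 h1))
  · exact absurd h (ne_of_gt (lexGt hx hy i₀ hlt h1 h2))
  · exact hi₀mem (h1.trans h2.symm)

@[simp] lemma coeffFn_apply {d : ℕ} (c x : Fin d → ℝ) : coeffFn c x = ∑ i, c i * x i := rfl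

def wallGc {d : ℕ} (σ : Fin d → Option Bool) : Fin d → ℝ := fun i =>
  if σ i = some true then 1 else if σ i = some false then -1 else 0

def wallTt {d : ℕ} (σ : Fin d → Option Bool) : Fin d → ℝ := fun i =>
  if σ i = some true then 1 else 0

def wallM {d : ℕ} (σ : Fin d → Option Bool) : ℝ := ∑ i, wallTt σ i

lemma wallGc_term {d : ℕ} (σ : Fin d → Option Bool) {x : Fin d → ℝ} (i : Fin d)
    (hx : x i = 0 ∨ x i = 1) : wallGc σ i * x i ≤ wallTt σ i := by
  rcases hb : σ i with _|b
  · simp [wallGc, wallTt, hb]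
  · rcases b with _|_ <;> rcases hx with h|h <;> simp [wallGc, wallTt, hb, h]

lemma wallGc_term_eq {d : ℕ} (σ : Fin d → Option Bool) {x : Fin d → ℝ} (i : Fin d)
    (hx : x i = 0 ∨ x i = 1) :
    wallGc σ i * x i = wallTt σ i ↔ (∀ b, σ i = some b → x i = (if b then (1:ℝ) else 0)) := by
  rcases hb : σ i with _|b
  · simp [wallGc, wallTt, hb]
  · rcases b with _|_ <;> rcases hx with h|h <;> simp [wallGc, wallTt, hb, h]

lemma wallGc_term_viol {d : ℕ} (σ : Fin d → Option Bool) {x : Fin d → ℝ} (i : Fin d)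
    (hx : x i = 0 ∨ x i = 1) (b : Bool) (hb : σ i = some b)
    (hne : x i ≠ (if b then (1:ℝ) else 0)) :
    wallGc σ i * x i ≤ wallTt σ i - 1 := by
  rcases b with _|_ <;> rcases hx with h|h <;> simp_all [wallGc, wallTt, hb, h]

lemma wallG_le {d : ℕ} (σ : Fin d → Option Bool) {x : Fin d → ℝ}
    (hx : ∀ i, x i = 0 ∨ x i = 1) : coeffFn (wallGc σ) x ≤ wallM σ := by
  rw [coeffFn_apply, wallM]
  exact Finset.sum_le_sum (fun i _ => wallGc_term σ i (hx i))

lemma wallG_eq_iff {d : ℕ} (σ : Fin d → Option Bool) {x : Fin d → ℝ}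
    (hx : ∀ i, x i = 0 ∨ x i = 1) :
    coeffFn (wallGc σ) x = wallM σ ↔
      (∀ i, ∀ b, σ i = some b → x i = (if b then (1:ℝ) else 0)) := by
  rw [coeffFn_apply, wallM,
    Finset.sum_eq_sum_iff_of_le (fun i _ => wallGc_term σ i (hx i))]
  constructor
  · intro h i b hb
    exact (wallGc_term_eq σ i (hx i)).1 (h i (Finset.mem_univ i)) b hb
  · intro h i _
    exact (wallGc_term_eq σ i (hx i)).2 (fun b hb => h i b hb)

lemma wallG_gap {d : ℕ} (σ : Fin d → Option Bool) {x : Fin d → ℝ}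
    (hx : ∀ i, x i = 0 ∨ x i = 1) (i₀ : Fin d) (b : Bool) (hb : σ i₀ = some b)
    (hne : x i₀ ≠ (if b then (1:ℝ) else 0)) :
    coeffFn (wallGc σ) x ≤ wallM σ - 1 := by
  have key : ∀ i, wallGc σ i * x i ≤ wallTt σ i - (if i = i₀ then 1 else 0) := by
    intro i
    by_cases h : i = i₀
    · subst h; simpa using wallGc_term_viol σ i (hx i) b hb hne
    · simpa [h] using wallGc_term σ i (hx i)
  rw [coeffFn_apply]
  calc (∑ i, wallGc σ i * x i) ≤ ∑ i, (wallTt σ i - (if i = i₀ then 1 else 0)) :=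
        Finset.sum_le_sum (fun i _ => key i)
    _ = wallM σ - 1 := by
        rw [Finset.sum_sub_distrib, Finset.sum_ite_eq' Finset.univ i₀]; simp [wallM]

lemma polytopeAdj_symm {ι : Type*} [Fintype ι] {X : Finset (ι → ℝ)} {u v : ι → ℝ}
    (h : PolytopeAdj X u v) : PolytopeAdj X v u := by
  obtain ⟨hu, hv, hne, f, c, h1, h2⟩ := h
  exact ⟨hv, hu, hne.symm, f, c, h1, by rw [h2, segment_symm]⟩


lemma exists_crossing {d : ℕ} (X : Finset (Fin d → ℝ)) (hX01 : IsZeroOne X)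
    (W : Set (Fin d → ℝ)) (hW : IsWall X W) (μ : Fin d)
    (h0 : ∃ x ∈ W, x μ = 0) (h1 : ∃ y ∈ W, y μ = 1) :
    ∃ u v, u ∈ W ∧ v ∈ W ∧ u μ = 0 ∧ v μ = 1 ∧ PolytopeAdj X u v := by
  obtain ⟨-, σ, hWσ⟩ := hW
  have hmemW : ∀ x, x ∈ W ↔ (x ∈ X ∧ ∀ i, ∀ b, σ i = some b →
      x i = (if b then (1:ℝ) else 0)) := by rw [hWσ]; intro x; rfl
  have hWX : ∀ x ∈ W, x ∈ X := fun x hx => ((hmemW x).1 hx).1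
  obtain ⟨u, hu, huμ⟩ := h0
  obtain ⟨v, hv, hvμ⟩ := h1
  -- maximizers of the lex functional on the two parts
  obtain ⟨u', hu'S, hu'max⟩ := Finset.exists_max_image
    (X.filter (fun x => x ∈ W ∧ x μ = 0)) (fun x => coeffFn (lexW d) x)
    ⟨u, Finset.mem_filter.2 ⟨hWX u hu, hu, huμ⟩⟩
  obtain ⟨v', hv'S, hv'max⟩ := Finset.exists_max_image
    (X.filter (fun x => x ∈ W ∧ x μ = 1)) (fun x => coeffFn (lexW d) x)
    ⟨v, Finset.mem_filter.2 ⟨hWX v hv, hv, hvμ⟩⟩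
  obtain ⟨hu'X, hu'W, hu'μ⟩ := Finset.mem_filter.1 hu'S
  obtain ⟨hv'X, hv'W, hv'μ⟩ := Finset.mem_filter.1 hv'S
  have hinj : ∀ x ∈ X, ∀ y ∈ X, coeffFn (lexW d) x = coeffFn (lexW d) y → x = y := by
    intro x hx y hy h
    exact lexInj (hX01 x hx) (hX01 y hy) (by simpa using h)
  have hu'vne : u' ≠ v' := by
    intro he; rw [he, hv'μ] at hu'μ; norm_num at hu'μ
  -- the tilted functional h
  set t : ℝ := coeffFn (lexW d) u' - coeffFn (lexW d) v' with ht
  set hfn : (Fin d → ℝ) →ₗ[ℝ] ℝ := coeffFn (lexW d) + t • LinearMap.proj μ with hh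
  have happ : ∀ x, hfn x = coeffFn (lexW d) x + t * x μ := by
    intro x; rw [hh]; simp [smul_eq_mul]
  set c1 : ℝ := coeffFn (lexW d) u' with hc1
  have hWmax : ∀ x ∈ W, hfn x ≤ c1 ∧ (hfn x = c1 ↔ x = u' ∨ x = v') := by
    intro x hxW
    have hxX := hWX x hxW
    rcases hX01 x hxX μ with hxμ|hxμ
    · have hle : coeffFn (lexW d) x ≤ coeffFn (lexW d) u' :=
        hu'max x (Finset.mem_filter.2 ⟨hxX, hxW, hxμ⟩)
      have hx' : hfn x = coeffFn (lexW d) x := by rw [happ, hxμ]; ring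
      refine ⟨by rw [hx']; exact hle, ?_, ?_⟩
      · intro he; exact Or.inl (hinj x hxX u' hu'X (by rw [← hx', he, hc1]))
      · rintro (rfl|rfl)
        · rw [hx', hc1]
        · rw [hv'μ] at hxμ; norm_num at hxμ
    · have hle : coeffFn (lexW d) x ≤ coeffFn (lexW d) v' :=
        hv'max x (Finset.mem_filter.2 ⟨hxX, hxW, hxμ⟩)
      have hx' : hfn x = coeffFn (lexW d) x + t := by rw [happ, hxμ]; ring
      have hvc : coeffFn (lexW d) v' + t = c1 := by rw [ht, hc1]; ring
      refine ⟨by rw [hx', ← hvc]; linarith, ?_, ?_⟩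
      · intro he
        refine Or.inr (hinj x hxX v' hv'X ?_)
        rw [← hvc] at he; rw [hx'] at he; linarith
      · rintro (rfl|rfl)
        · rw [hu'μ] at hxμ; norm_num at hxμ
        · rw [hx', hvc]
  -- the big functional f
  set N : ℝ := 1 + ∑ x ∈ X, |hfn x - c1| with hN
  have hN1 : 1 ≤ N := by
    have : (0:ℝ) ≤ ∑ x ∈ X, |hfn x - c1| := Finset.sum_nonneg (fun x _ => abs_nonneg _)
    rw [hN]; linarith
  have hNbig : ∀ x ∈ X, hfn x - c1 ≤ N - 1 := by
    intro x hx
    have h1 : |hfn x - c1| ≤ ∑ y ∈ X, |hfn y - c1| :=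
      Finset.single_le_sum (f := fun y => |hfn y - c1|) (fun y _ => abs_nonneg _) hx
    have h2 := le_abs_self (hfn x - c1)
    rw [hN]; linarith
  set f : (Fin d → ℝ) →ₗ[ℝ] ℝ := N • coeffFn (wallGc σ) + hfn with hf
  have hfapp : ∀ x, f x = N * coeffFn (wallGc σ) x + hfn x := by
    intro x; rw [hf]; simp [smul_eq_mul]
  set C : ℝ := N * wallM σ + c1 with hC
  have hXle : ∀ x ∈ X, f x ≤ C ∧ (f x = C ↔ x = u' ∨ x = v') := by
    intro x hx
    by_cases hxW : x ∈ W
    · have hgm : coeffFn (wallGc σ) x = wallM σ :=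
        (wallG_eq_iff σ (hX01 x hx)).2 ((hmemW x).1 hxW).2
      obtain ⟨hle, hiff⟩ := hWmax x hxW
      rw [hfapp, hgm, hC]
      constructor
      · linarith
      · constructor
        · intro he; exact hiff.1 (by linarith)
        · intro he; have := hiff.2 he; linarith
    · have hviol : ∃ i b, σ i = some b ∧ x i ≠ (if b then (1:ℝ) else 0) := by
        by_contra hcon
        push_neg at hcon
        exact hxW ((hmemW x).2 ⟨hx, fun i b hb => hcon i b hb⟩)
      obtain ⟨i₀, b, hb, hne⟩ := hviol
      have hgm : coeffFn (wallGc σ) x ≤ wallM σ - 1 := wallG_gap σ (hX01 x hx) i₀ b hb hne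
      have hh1 : hfn x - c1 ≤ N - 1 := hNbig x hx
      have hstrict : f x < C := by
        rw [hfapp, hC]; nlinarith
      refine ⟨le_of_lt hstrict, ?_, ?_⟩
      · intro he; exact absurd he (ne_of_lt hstrict)
      · rintro (rfl|rfl)
        · exact absurd hu'W hxW
        · exact absurd hv'W hxW
  -- extend to the convex hull
  have hconvle : ∀ x ∈ convexHull ℝ (X : Set (Fin d → ℝ)), f x ≤ C := by
    intro x hx
    rw [Finset.convexHull_eq] at hx
    obtain ⟨wgt, hw0, hw1, hcm⟩ := hx
    rw [Finset.centerMass_eq_of_sum_1 _ id hw1] at hcm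
    simp only [id_eq] at hcm
    have hfx : f x = ∑ y ∈ X, wgt y * f y := by
      rw [← hcm, map_sum]
      exact Finset.sum_congr rfl (fun y _ => by simp [smul_eq_mul])
    rw [hfx]
    calc ∑ y ∈ X, wgt y * f y ≤ ∑ y ∈ X, wgt y * C :=
        Finset.sum_le_sum (fun y hy => mul_le_mul_of_nonneg_left ((hXle y hy).1) (hw0 y hy))
      _ = C := by rw [← Finset.sum_mul, hw1, one_mul]
  have hseg : {x ∈ convexHull ℝ (X : Set (Fin d → ℝ)) | f x = C} = segment ℝ u' v' := by
    ext z
    simp only [Set.mem_setOf_eq]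
    constructor
    · rintro ⟨hz, hfz⟩
      rw [Finset.convexHull_eq] at hz
      obtain ⟨wgt, hw0, hw1, hcm⟩ := hz
      rw [Finset.centerMass_eq_of_sum_1 _ id hw1] at hcm
      simp only [id_eq] at hcm
      have hfz' : ∑ y ∈ X, wgt y * f y = ∑ y ∈ X, wgt y * C := by
        rw [← Finset.sum_mul, hw1, one_mul, ← hfz, ← hcm, map_sum]
        exact Finset.sum_congr rfl (fun y _ => by simp [smul_eq_mul])
      have hkey : ∀ y ∈ X, wgt y * f y = wgt y * C :=
        (Finset.sum_eq_sum_iff_of_le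
          (fun y hy => mul_le_mul_of_nonneg_left ((hXle y hy).1) (hw0 y hy))).1 hfz'
      have hsupp : ∀ y ∈ X, wgt y ≠ 0 → y = u' ∨ y = v' := by
        intro y hy hwy
        exact ((hXle y hy).2).1 (mul_left_cancel₀ hwy (hkey y hy))
      have hpair : ({u', v'} : Finset (Fin d → ℝ)) ⊆ X := by
        intro y hy
        rcases Finset.mem_insert.1 hy with rfl|hy'
        · exact hu'X
        · rw [Finset.mem_singleton.1 hy']; exact hv'X
      have hvanish : ∀ y ∈ X, y ∉ ({u', v'} : Finset (Fin d → ℝ)) → wgt y = 0 := by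
        intro y hy hyn
        by_contra hne
        rcases hsupp y hy hne with rfl|rfl
        · exact hyn (Finset.mem_insert_self _ _)
        · exact hyn (Finset.mem_insert.2 (Or.inr (Finset.mem_singleton_self _)))
      have hz1 : z = wgt u' • u' + wgt v' • v' := by
        rw [← hcm, ← Finset.sum_subset hpair (fun y hy hyn => by rw [hvanish y hy hyn, zero_smul]),
          Finset.sum_pair hu'vne]
      have hsum1 : wgt u' + wgt v' = 1 := by
        rw [← hw1, ← Finset.sum_subset hpair (fun y hy hyn => hvanish y hy hyn),
          Finset.sum_pair hu'vne]
      exact ⟨wgt u', wgt v', hw0 u' (hpair (Finset.mem_insert_self _ _)),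
        hw0 v' (hpair (Finset.mem_insert.2 (Or.inr (Finset.mem_singleton_self _)))),
        hsum1, hz1.symm⟩
    · rintro ⟨a, b, ha, hb, hab, rfl⟩
      have huC : f u' = C := ((hXle u' hu'X).2).2 (Or.inl rfl)
      have hvC : f v' = C := ((hXle v' hv'X).2).2 (Or.inr rfl)
      refine ⟨(convex_convexHull ℝ _).segment_subset
          (subset_convexHull ℝ _ hu'X) (subset_convexHull ℝ _ hv'X) ⟨a, b, ha, hb, hab, rfl⟩, ?_⟩
      rw [map_add, map_smul, map_smul, smul_eq_mul, smul_eq_mul, huC, hvC, ← add_mul, hab,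
        one_mul]
  exact ⟨u', v', hu'W, hv'W, hu'μ, hv'μ, hu'X, hv'X, hu'vne, f, C, hconvle, hseg⟩

set_option maxHeartbeats 1000000 in
/-- If `P ⊆ ℝ^d` is a 0/1-polytope such that for every wall `W`
of `P` the subgraph of `G(P)` induced on `W` is a regular graph, then `P` has
fractional wall-matchings. -/
theorem hasFractionalWallMatchings_of_regular_walls {d : ℕ} (X : Finset (Fin d → ℝ))
    (hX01 : IsZeroOne X)
    (hreg : ∀ W : Set (Fin d → ℝ), IsWall X W →
      ∃ k : ℕ, ∀ x ∈ W, {y | y ∈ W ∧ PolytopeAdj X x y}.ncard = k) :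
    HasFractionalWallMatchings X := by
  intro W hW μ hμ
  obtain ⟨hWne, σ, hWσ⟩ := id hW
  have hmemW : ∀ x, x ∈ W ↔ (x ∈ X ∧ ∀ i, ∀ b, σ i = some b →
      x i = (if b then (1:ℝ) else 0)) := by rw [hWσ]; intro x; rfl
  have hWX : ∀ x ∈ W, x ∈ X := fun x hx => ((hmemW x).1 hx).1
  -- both parts nonempty
  obtain ⟨⟨x₀, hx₀, y₀, hy₀, hxyne⟩, -⟩ := hμ
  have hparts : (∃ x ∈ W, x μ = 0) ∧ (∃ y ∈ W, y μ = 1) := by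
    rcases hX01 x₀ (hWX x₀ hx₀) μ with h|h <;> rcases hX01 y₀ (hWX y₀ hy₀) μ with h'|h'
    · exact absurd (h.trans h'.symm) hxyne
    · exact ⟨⟨x₀, hx₀, h⟩, ⟨y₀, hy₀, h'⟩⟩
    · exact ⟨⟨y₀, hy₀, h'⟩, ⟨x₀, hx₀, h⟩⟩
    · exact absurd (h.trans h'.symm) hxyne
  obtain ⟨h0, h1⟩ := hparts
  have hσμ : σ μ = none := by
    rcases hb : σ μ with _|b
    · rfl
    · exfalso
      have e1 := ((hmemW x₀).1 hx₀).2 μ b hb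
      have e2 := ((hmemW y₀).1 hy₀).2 μ b hb
      exact hxyne (e1.trans e2.symm)
  -- the two parts are walls
  have hW0 : IsWall X {x ∈ W | x μ = 0} := by
    obtain ⟨x, hx, hxμ⟩ := h0
    refine ⟨⟨x, hx, hxμ⟩, Function.update σ μ (some false), ?_⟩
    ext z
    simp only [Set.mem_setOf_eq]
    constructor
    · rintro ⟨hzW, hzμ⟩
      refine ⟨hWX z hzW, fun i b hb => ?_⟩
      by_cases hiμ : i = μ
      · subst hiμ
        rw [Function.update_self] at hb
        cases hb
        simpa using hzμ
      · rw [Function.update_of_ne hiμ] at hb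
        exact ((hmemW z).1 hzW).2 i b hb
    · rintro ⟨hzX, hcond⟩
      constructor
      · refine (hmemW z).2 ⟨hzX, fun i b hb => ?_⟩
        by_cases hiμ : i = μ
        · subst hiμ; rw [hσμ] at hb; cases hb
        · exact hcond i b (by rw [Function.update_of_ne hiμ]; exact hb)
      · simpa using hcond μ false (by rw [Function.update_self])
  have hW1 : IsWall X {x ∈ W | x μ = 1} := by
    obtain ⟨x, hx, hxμ⟩ := h1
    refine ⟨⟨x, hx, hxμ⟩, Function.update σ μ (some true), ?_⟩
    ext z
    simp only [Set.mem_setOf_eq]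
    constructor
    · rintro ⟨hzW, hzμ⟩
      refine ⟨hWX z hzW, fun i b hb => ?_⟩
      by_cases hiμ : i = μ
      · subst hiμ
        rw [Function.update_self] at hb
        cases hb
        simpa using hzμ
      · rw [Function.update_of_ne hiμ] at hb
        exact ((hmemW z).1 hzW).2 i b hb
    · rintro ⟨hzX, hcond⟩
      constructor
      · refine (hmemW z).2 ⟨hzX, fun i b hb => ?_⟩
        by_cases hiμ : i = μ
        · subst hiμ; rw [hσμ] at hb; cases hb
        · exact hcond i b (by rw [Function.update_of_ne hiμ]; exact hb)
      · simpa using hcond μ true (by rw [Function.update_self])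
  -- regularity degrees
  obtain ⟨k, hk⟩ := hreg W hW
  obtain ⟨k₀, hk₀⟩ := hreg _ hW0
  obtain ⟨k₁, hk₁⟩ := hreg _ hW1
  -- finset versions
  set Wf : Finset (Fin d → ℝ) := X.filter (fun x => x ∈ W) with hWf
  set Wf₀ : Finset (Fin d → ℝ) := X.filter (fun x => x ∈ W ∧ x μ = 0) with hWf₀
  set Wf₁ : Finset (Fin d → ℝ) := X.filter (fun x => x ∈ W ∧ x μ = 1) with hWf₁
  have hmWf : ∀ y, y ∈ Wf ↔ y ∈ W := by
    intro y; rw [hWf, Finset.mem_filter]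
    exact ⟨fun h => h.2, fun h => ⟨hWX y h, h⟩⟩
  have hmWf₀ : ∀ y, y ∈ Wf₀ ↔ y ∈ W ∧ y μ = 0 := by
    intro y; rw [hWf₀, Finset.mem_filter]
    exact ⟨fun h => h.2, fun h => ⟨hWX y h.1, h⟩⟩
  have hmWf₁ : ∀ y, y ∈ Wf₁ ↔ y ∈ W ∧ y μ = 1 := by
    intro y; rw [hWf₁, Finset.mem_filter]
    exact ⟨fun h => h.2, fun h => ⟨hWX y h.1, h⟩⟩
  clear_value Wf Wf₀ Wf₁
  -- ncard ↔ card
  have hcardW : ∀ x, {y | y ∈ W ∧ PolytopeAdj X x y}.ncard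
      = (Wf.filter (fun y => PolytopeAdj X x y)).card := by
    intro x
    rw [← Set.ncard_coe_finset]
    congr 1
    ext y
    simp only [Finset.coe_filter, Set.mem_setOf_eq, hmWf y]
  have hcardW0 : ∀ x, {y | y ∈ {x ∈ W | x μ = 0} ∧ PolytopeAdj X x y}.ncard
      = (Wf₀.filter (fun y => PolytopeAdj X x y)).card := by
    intro x
    rw [← Set.ncard_coe_finset]
    congr 1
    ext y
    simp only [Finset.coe_filter, Set.mem_setOf_eq, hmWf₀ y]
  have hcardW1 : ∀ x, {y | y ∈ {x ∈ W | x μ = 1} ∧ PolytopeAdj X x y}.ncard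
      = (Wf₁.filter (fun y => PolytopeAdj X x y)).card := by
    intro x
    rw [← Set.ncard_coe_finset]
    congr 1
    ext y
    simp only [Finset.coe_filter, Set.mem_setOf_eq, hmWf₁ y]
  -- splitting the neighborhood
  have hsplit : ∀ x, Wf.filter (fun y => PolytopeAdj X x y)
      = Wf₀.filter (fun y => PolytopeAdj X x y) ∪ Wf₁.filter (fun y => PolytopeAdj X x y) := by
    intro x
    ext y
    simp only [Finset.mem_union, Finset.mem_filter, hWf, hWf₀, hWf₁]
    constructor
    · rintro ⟨⟨hyX, hyW⟩, hadj⟩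
      rcases hX01 y hyX μ with h|h
      · exact Or.inl ⟨⟨hyX, hyW, h⟩, hadj⟩
      · exact Or.inr ⟨⟨hyX, hyW, h⟩, hadj⟩
    · rintro (⟨⟨hyX, hyW, -⟩, hadj⟩|⟨⟨hyX, hyW, -⟩, hadj⟩) <;> exact ⟨⟨hyX, hyW⟩, hadj⟩
  have hdisj : ∀ x, Disjoint (Wf₀.filter (fun y => PolytopeAdj X x y))
      (Wf₁.filter (fun y => PolytopeAdj X x y)) := by
    intro x
    rw [Finset.disjoint_left]
    intro y hy hy'
    rw [Finset.mem_filter] at hy hy'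
    have h0' := ((hmWf₀ y).1 hy.1).2
    have h1' := ((hmWf₁ y).1 hy'.1).2
    rw [h0'] at h1'; norm_num at h1'
  -- biregularity
  have hdeg0 : ∀ u ∈ Wf₀, k₀ + (Wf₁.filter (fun y => PolytopeAdj X u y)).card = k := by
    intro u hu
    have huW0 := (hmWf₀ u).1 hu
    have e1 : (Wf.filter (fun y => PolytopeAdj X u y)).card = k := by
      rw [← hcardW u]; exact hk u huW0.1
    have e0 : (Wf₀.filter (fun y => PolytopeAdj X u y)).card = k₀ := by
      rw [← hcardW0 u]; exact hk₀ u huW0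
    rw [← e1, hsplit u, Finset.card_union_of_disjoint (hdisj u), e0]
  have hdeg1 : ∀ v ∈ Wf₁, k₁ + (Wf₀.filter (fun y => PolytopeAdj X v y)).card = k := by
    intro v hv
    have hvW1 := (hmWf₁ v).1 hv
    have e1 : (Wf.filter (fun y => PolytopeAdj X v y)).card = k := by
      rw [← hcardW v]; exact hk v hvW1.1
    have e0 : (Wf₁.filter (fun y => PolytopeAdj X v y)).card = k₁ := by
      rw [← hcardW1 v]; exact hk₁ v hvW1
    rw [← e1, hsplit v, Finset.card_union_of_disjoint (hdisj v), e0, add_comm]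
  -- edge counting
  set E : Finset ((Fin d → ℝ) × (Fin d → ℝ)) :=
    (Wf₀ ×ˢ Wf₁).filter (fun p => PolytopeAdj X p.1 p.2) with hE
  clear_value E
  have hE1 : E.card = ∑ u ∈ Wf₀, (Wf₁.filter (fun y => PolytopeAdj X u y)).card := by
    rw [Finset.card_eq_sum_card_fiberwise (f := Prod.fst) (t := Wf₀)
      (fun p hp => by
        rw [hE, Finset.mem_coe, Finset.mem_filter, Finset.mem_product] at hp; exact hp.1.1)]
    refine Finset.sum_congr rfl (fun u hu => ?_)
    have hfib : E.filter (fun p => p.1 = u)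
        = {u} ×ˢ (Wf₁.filter (fun y => PolytopeAdj X u y)) := by
      ext p
      simp only [hE, Finset.mem_filter, Finset.mem_product, Finset.mem_singleton]
      constructor
      · rintro ⟨⟨⟨h1', h2'⟩, h3'⟩, h4'⟩
        exact ⟨h4', h2', by rw [← h4']; exact h3'⟩
      · rintro ⟨h1', h2', h3'⟩
        exact ⟨⟨⟨by rw [h1']; exact hu, h2'⟩, by rw [h1']; exact h3'⟩, h1'⟩
    rw [hfib, Finset.card_product, Finset.card_singleton, one_mul]
  have hE2 : E.card = ∑ v ∈ Wf₁, (Wf₀.filter (fun y => PolytopeAdj X v y)).card := by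
    rw [Finset.card_eq_sum_card_fiberwise (f := Prod.snd) (t := Wf₁)
      (fun p hp => by
        rw [hE, Finset.mem_coe, Finset.mem_filter, Finset.mem_product] at hp; exact hp.1.2)]
    refine Finset.sum_congr rfl (fun v hv => ?_)
    have hfib : E.filter (fun p => p.2 = v)
        = (Wf₀.filter (fun y => PolytopeAdj X v y)) ×ˢ {v} := by
      ext p
      simp only [hE, Finset.mem_filter, Finset.mem_product, Finset.mem_singleton]
      constructor
      · rintro ⟨⟨⟨h1', h2'⟩, h3'⟩, h4'⟩
        exact ⟨⟨h1', polytopeAdj_symm (by rw [← h4']; exact h3')⟩, h4'⟩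
      · rintro ⟨⟨h1', h2'⟩, h3'⟩
        exact ⟨⟨⟨h1', by rw [h3']; exact hv⟩, by rw [h3']; exact polytopeAdj_symm h2'⟩, h3'⟩
    rw [hfib, Finset.card_product, Finset.card_singleton, mul_one]
  have hE1' : E.card = Wf₀.card * (k - k₀) := by
    rw [hE1, Finset.sum_congr rfl (fun u hu => show _ = k - k₀ by
      have := hdeg0 u hu; omega), Finset.sum_const, smul_eq_mul]
  have hE2' : E.card = Wf₁.card * (k - k₁) := by
    rw [hE2, Finset.sum_congr rfl (fun v hv => show _ = k - k₁ by
      have := hdeg1 v hv; omega), Finset.sum_const, smul_eq_mul]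
  -- the crossing edge makes E nonempty
  obtain ⟨u', v', hu'W, hv'W, hu'μ, hv'μ, hadj'⟩ := exists_crossing X hX01 W hW μ h0 h1
  have hEpos : 0 < E.card := by
    refine Finset.card_pos.2 ⟨(u', v'), ?_⟩
    rw [hE, Finset.mem_filter, Finset.mem_product]
    exact ⟨⟨(hmWf₀ u').2 ⟨hu'W, hu'μ⟩, (hmWf₁ v').2 ⟨hv'W, hv'μ⟩⟩, hadj'⟩
  have hA0 : 0 < k - k₀ := Nat.pos_of_ne_zero (fun h => by
    rw [hE1', h, mul_zero] at hEpos; exact lt_irrefl 0 hEpos)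
  have hB0 : 0 < k - k₁ := Nat.pos_of_ne_zero (fun h => by
    rw [hE2', h, mul_zero] at hEpos; exact lt_irrefl 0 hEpos)
  -- ncard of the parts
  have hnc0 : ({x ∈ W | x μ = 0}).ncard = Wf₀.card := by
    rw [← Set.ncard_coe_finset]
    congr 1
    ext y
    simp only [Finset.coe_filter, Set.mem_setOf_eq, hWf₀]
    constructor
    · rintro ⟨h1', h2'⟩; exact ⟨hWX y h1', h1', h2'⟩
    · rintro ⟨-, h⟩; exact h
  have hnc1 : ({x ∈ W | x μ = 1}).ncard = Wf₁.card := by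
    rw [← Set.ncard_coe_finset]
    congr 1
    ext y
    simp only [Finset.coe_filter, Set.mem_setOf_eq, hWf₁]
    constructor
    · rintro ⟨h1', h2'⟩; exact ⟨hWX y h1', h1', h2'⟩
    · rintro ⟨-, h⟩; exact h
  -- the fractional matching
  refine ⟨fun u v => if WallBipAdj X W μ u v then ((E.card : ℚ))⁻¹ else 0, ?_, ?_, ?_, ?_⟩
  · intro u v
    dsimp only
    split_ifs
    · positivity
    · exact le_refl 0
  · intro u v h
    dsimp only at h
    by_cases hadj : WallBipAdj X W μ u v
    · exact hadj
    · rw [if_neg hadj] at h; exact absurd rfl h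
  · intro u huW huμ0
    dsimp only
    have huWf₀ : u ∈ Wf₀ := (hmWf₀ u).2 ⟨huW, huμ0⟩
    have hfe : X.filter (fun v => WallBipAdj X W μ u v)
        = Wf₁.filter (fun v => PolytopeAdj X u v) := by
      ext v
      simp only [Finset.mem_filter, hWf₁]
      constructor
      · rintro ⟨hvX, hadj, -, hvW, -, hvμ⟩
        exact ⟨⟨hvX, hvW, hvμ⟩, hadj⟩
      · rintro ⟨⟨hvX, hvW, hvμ⟩, hadj⟩
        exact ⟨hvX, hadj, huW, hvW, huμ0, hvμ⟩
    rw [← Finset.sum_filter, hfe, Finset.sum_const, nsmul_eq_mul, hnc0]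
    have hcnt := hdeg0 u huWf₀
    have hcard : (Wf₁.filter (fun v => PolytopeAdj X u v)).card = k - k₀ :=
      Nat.eq_sub_of_add_eq' hcnt
    rw [hcard, hE1']
    have h1' : ((k - k₀ : ℕ) : ℚ) ≠ 0 := Nat.cast_ne_zero.2 (Nat.pos_iff_ne_zero.1 hA0)
    have h2' : ((Wf₀.card : ℕ) : ℚ) ≠ 0 := by
      have h3' : 0 < Wf₀.card := Finset.card_pos.2 ⟨u, huWf₀⟩
      exact Nat.cast_ne_zero.2 (Nat.pos_iff_ne_zero.1 h3')
    push_cast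
    field_simp
  · intro v hvW hvμ1
    dsimp only
    have hvWf₁ : v ∈ Wf₁ := (hmWf₁ v).2 ⟨hvW, hvμ1⟩
    have hfe : X.filter (fun u => WallBipAdj X W μ u v)
        = Wf₀.filter (fun u => PolytopeAdj X v u) := by
      ext u
      simp only [Finset.mem_filter, hWf₀]
      constructor
      · rintro ⟨huX, hadj, huW, -, huμ, -⟩
        exact ⟨⟨huX, huW, huμ⟩, polytopeAdj_symm hadj⟩
      · rintro ⟨⟨huX, huW, huμ⟩, hadj⟩
        exact ⟨huX, polytopeAdj_symm hadj, huW, hvW, huμ, hvμ1⟩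
    rw [← Finset.sum_filter, hfe, Finset.sum_const, nsmul_eq_mul, hnc1]
    have hcnt := hdeg1 v hvWf₁
    have hcard : (Wf₀.filter (fun u => PolytopeAdj X v u)).card = k - k₁ :=
      Nat.eq_sub_of_add_eq' hcnt
    rw [hcard, hE2']
    have h1' : ((k - k₁ : ℕ) : ℚ) ≠ 0 := Nat.cast_ne_zero.2 (Nat.pos_iff_ne_zero.1 hB0)
    have h2' : ((Wf₁.card : ℕ) : ℚ) ≠ 0 := by
      have h3' : 0 < Wf₁.card := Finset.card_pos.2 ⟨v, hvWf₁⟩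
      exact Nat.cast_ne_zero.2 (Nat.pos_iff_ne_zero.1 h3')
    push_cast
    field_simp
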